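/- arXiv:2406.02937 — 2 statements merged into one kernel-verified Lean document; each statement's English description precedes it below -/
import Mathlib

section
/- (Main theorem.) Let r : ℕ → ℝ be any sequence and define p(n) = Σ_{i=0}^{n} r(i)·r(n−i). Then for all natural numbers k, m, n, p(n)·F(k·n + 2m) = Σ_{i=0}^{n} r(i)·L(k·i + m)·r(n−i)·F(k·(n−i) + m). -/
noncomputable def genFib (a b : ℝ) : ℕ → ℝ
  | 0 => 0
  | 1 => 1
  | n + 2 => a * genFib a b (n + 1) + b * genFib a b n

noncomputable def genLuc (a b : ℝ) : ℕ → ℝ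
  | 0 => 2
  | 1 => a
  | n + 2 => a * genLuc a b (n + 1) + b * genLuc a b n

lemma genFib_add (a b : ℝ) : ∀ y x, genFib a b (x + y + 1) =
    genFib a b (x + 1) * genFib a b (y + 1) + b * genFib a b x * genFib a b y := by
  intro y
  induction y using Nat.twoStepInduction with
  | zero => intro x; simp [genFib]
  | one =>
    intro x
    have h : x + 1 + 1 = x + 2 := by omega
    rw [h]
    simp [genFib]; ring
  | more y ih1 ih2 =>
    intro x
    have h : x + (y + 2) + 1 = (x + y + 1) + 2 := by omega
    rw [h, show (x + y + 1) + 2 = ((x+y+1)+1)+1 from rfl]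
    have e1 : genFib a b (x + y + 1 + 1 + 1) =
        a * genFib a b (x + y + 1 + 1) + b * genFib a b (x + y + 1) := rfl
    have e2 : x + y + 1 + 1 = x + (y + 1) + 1 := by omega
    rw [e1, e2, ih2 x, ih1 x]
    have e3 : genFib a b (y + 2 + 1) = a * genFib a b (y + 2) + b * genFib a b (y + 1) := rfl
    have e4 : genFib a b (y + 1 + 1) = a * genFib a b (y + 1) + b * genFib a b y := rfl
    rw [e3, e4]
    ring

lemma genLuc_eq (a b : ℝ) : ∀ n, genLuc a b n = 2 * genFib a b (n + 1) - a * genFib a b n := by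
  intro n
  induction n using Nat.twoStepInduction with
  | zero => simp [genLuc, genFib]
  | one => simp [genLuc, genFib]; ring
  | more n ih1 ih2 =>
    have e1 : genLuc a b (n + 2) = a * genLuc a b (n + 1) + b * genLuc a b n := rfl
    have e2 : genFib a b (n + 2 + 1) = a * genFib a b (n + 2) + b * genFib a b (n + 1) := rfl
    have e3 : genFib a b (n + 2) = a * genFib a b (n + 1) + b * genFib a b n := rfl
    rw [e1, ih1, ih2, e2, e3]
    ring

lemma key (a b : ℝ) : ∀ x y, genLuc a b x * genFib a b y + genFib a b x * genLuc a b y =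
    2 * genFib a b (x + y) := by
  intro x
  induction x using Nat.twoStepInduction with
  | zero => intro y; simp [genLuc, genFib]
  | one =>
    intro y
    have : genLuc a b 1 = a := rfl
    rw [this, genLuc_eq a b y, show genFib a b 1 = 1 from rfl,
      show 1 + y = y + 1 from by omega]
    ring
  | more x ih1 ih2 =>
    intro y
    have e1 : genLuc a b (x + 2) = a * genLuc a b (x + 1) + b * genLuc a b x := rfl
    have e2 : genFib a b (x + 2) = a * genFib a b (x + 1) + b * genFib a b x := rfl
    have e3 : x + 2 + y = (x + y) + 2 := by omega
    have e4 : genFib a b (x + y + 2) = a * genFib a b (x + y + 1) + b * genFib a b (x + y) := rfl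
    have e5 : x + 1 + y = x + y + 1 := by omega
    rw [e1, e2, e3, e4]
    have h1 := ih1 y
    have h2 := ih2 y
    rw [e5] at h2
    linear_combination a * h2 + b * h1

theorem genFib_main_identity (a b : ℝ) (r : ℕ → ℝ)
    (p : ℕ → ℝ) (hp : ∀ n, p n = ∑ i ∈ Finset.range (n + 1), r i * r (n - i))
    (k m n : ℕ) :
    p n * genFib a b (k * n + 2 * m) =
      ∑ i ∈ Finset.range (n + 1),
        r i * genLuc a b (k * i + m) * r (n - i) * genFib a b (k * (n - i) + m) := by
  set S := ∑ i ∈ Finset.range (n + 1),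
      r i * genLuc a b (k * i + m) * r (n - i) * genFib a b (k * (n - i) + m) with hS
  have hrefl : S = ∑ i ∈ Finset.range (n + 1),
      r (n - i) * genLuc a b (k * (n - i) + m) * r i * genFib a b (k * i + m) := by
    rw [hS, ← Finset.sum_range_reflect]
    apply Finset.sum_congr rfl
    intro i hi
    have hin : i ≤ n := by
      simp [Finset.mem_range] at hi; omega
    simp only [Nat.add_sub_cancel]
    have h1 : n - (n - i) = i := by omega
    rw [h1]
  have h2S : S + S = 2 * (p n * genFib a b (k * n + 2 * m)) := by
    nth_rewrite 2 [hrefl]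
    rw [hS, ← Finset.sum_add_distrib, hp, Finset.sum_mul, Finset.mul_sum]
    apply Finset.sum_congr rfl
    intro i hi
    have hin : i ≤ n := by
      simp [Finset.mem_range] at hi; omega
    have hsum : (k * i + m) + (k * (n - i) + m) = k * n + 2 * m := by
      have : k * i + k * (n - i) = k * n := by
        rw [← Nat.mul_add]; congr 1; omega
      omega
    have hk := key a b (k * i + m) (k * (n - i) + m)
    rw [hsum] at hk
    linear_combination (r i * r (n - i)) * hk
  linarith
end

section
/- (Convolution of generalized Fibonacci numbers.) If a² + 4b ≠ 0, then for every natural number n ≥ 1, Σ_{i=0}^{n} F(i)·F(n−i) = ( (n−1)·F(n+1) + b·(n+1)·F(n−1) ) / (a² + 4b). -/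
lemma genFib_add_two (a b : ℝ) (n : ℕ) :
    genFib a b (n + 2) = a * genFib a b (n + 1) + b * genFib a b n := rfl

lemma genFib_S_rec (a b : ℝ) (n : ℕ) :
    ∑ i ∈ Finset.range (n + 3), genFib a b i * genFib a b (n + 2 - i) =
    a * ∑ i ∈ Finset.range (n + 2), genFib a b i * genFib a b (n + 1 - i)
    + b * ∑ i ∈ Finset.range (n + 1), genFib a b i * genFib a b (n - i)
    + genFib a b (n + 1) := by
  rw [Finset.sum_range_succ, Finset.sum_range_succ]
  have h1 : ∀ i ∈ Finset.range (n + 1),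
      genFib a b i * genFib a b (n + 2 - i)
      = a * (genFib a b i * genFib a b (n + 1 - i))
        + b * (genFib a b i * genFib a b (n - i)) := by
    intro i hi
    rw [Finset.mem_range] at hi
    have e2 : n + 2 - i = (n - i) + 2 := by omega
    have e1 : n + 1 - i = (n - i) + 1 := by omega
    rw [e2, e1, genFib_add_two]
    ring
  rw [Finset.sum_congr rfl h1, Finset.sum_add_distrib, ← Finset.mul_sum, ← Finset.mul_sum]
  have h2 : ∑ i ∈ Finset.range (n + 2), genFib a b i * genFib a b (n + 1 - i)
      = ∑ i ∈ Finset.range (n + 1), genFib a b i * genFib a b (n + 1 - i) := by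
    rw [Finset.sum_range_succ]
    simp [genFib]
  rw [h2]
  simp [genFib]

lemma genFib_conv_aux (a b : ℝ) (hab : a ^ 2 + 4 * b ≠ 0) (m : ℕ) :
    ∑ i ∈ Finset.range (m + 2), genFib a b i * genFib a b (m + 1 - i) =
      ((m : ℝ) * genFib a b (m + 2) + b * ((m : ℝ) + 2) * genFib a b m) / (a ^ 2 + 4 * b) := by
  induction m using Nat.twoStepInduction with
  | zero =>
    rw [Finset.sum_range_succ, Finset.sum_range_succ, Finset.sum_range_zero]
    simp [genFib]
  | one =>
    rw [Finset.sum_range_succ, Finset.sum_range_succ, Finset.sum_range_succ,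
      Finset.sum_range_zero]
    simp only [genFib, Nat.cast_one]
    have hab' : a ^ 2 + b * 4 ≠ 0 := by rwa [mul_comm] at hab
    field_simp
    rw [show genFib a b 0 = 0 from rfl, show genFib a b 1 = 1 from rfl]
    ring
  | more m ih1 ih2 =>
    have hr := genFib_S_rec a b (m + 1)
    have hm4 : m + 2 + 2 = m + 1 + 3 := by omega
    have hm3 : m + 2 + 1 = m + 1 + 2 := by omega
    rw [hm4, hm3, hr, ih1, ih2]
    have e2 : genFib a b (m + 2) = a * genFib a b (m + 1) + b * genFib a b m := rfl
    have e3 : genFib a b (m + 1 + 2) = a * genFib a b (m + 2) + b * genFib a b (m + 1) := rfl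
    have e4 : genFib a b (m + 1 + 3) = a * genFib a b (m + 1 + 2) + b * genFib a b (m + 2) := by
      rfl
    rw [e4, e3, e2]
    push_cast
    have hab' : a ^ 2 + b * 4 ≠ 0 := by rwa [mul_comm] at hab
    field_simp
    ring

theorem genFib_convolution (a b : ℝ) (hab : a ^ 2 + 4 * b ≠ 0) (n : ℕ) (hn : 1 ≤ n) :
    ∑ i ∈ Finset.range (n + 1), genFib a b i * genFib a b (n - i) =
      (((n : ℝ) - 1) * genFib a b (n + 1) + b * ((n : ℝ) + 1) * genFib a b (n - 1)) /
        (a ^ 2 + 4 * b) := by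
  cases n with
  | zero => omega
  | succ m =>
    have h := genFib_conv_aux a b hab m
    have hs : m + 1 - 1 = m := by omega
    rw [hs]
    push_cast
    rw [show (m : ℝ) + 1 - 1 = (m : ℝ) by ring, show (m : ℝ) + 1 + 1 = (m : ℝ) + 2 by ring]
    exact h
end
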